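/- The Diophantine equation 2^{k+1} k^k − (k+1)^{k+1} = w² has no solutions in integers k, w with k ≥ 2. -/

import Mathlib

open Zsqrtd

lemma aux_odd_sq_mod8 {m : ℤ} (h : m % 2 = 1) : (8:ℤ) ∣ m^2 - 1 := by
  obtain ⟨j, hj⟩ : ∃ j, m = 2*j+1 := ⟨m / 2, by omega⟩
  obtain ⟨r, hr⟩ := Int.even_mul_succ_self j
  refine ⟨r, ?_⟩
  subst hj; linear_combination 4*hr

lemma aux_odd_pow_mod8 {m : ℤ} (h : m % 2 = 1) {n : ℕ} (hn : n % 2 = 1) :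
    (8:ℤ) ∣ m^n - m := by
  obtain ⟨j, hj⟩ : ∃ j, n = 2*j+1 := ⟨n/2, by omega⟩
  subst hj
  have h1 : m^(2*j+1) - m = m * ((m^2)^j - 1^j) := by ring
  rw [h1]
  have h2 : (8:ℤ) ∣ m^2 - 1^1 := by simpa using aux_odd_sq_mod8 h
  exact Dvd.dvd.mul_left
    ((by simpa using h2 : (8:ℤ) ∣ m^2 - 1).trans (sub_dvd_pow_sub_pow (m^2) 1 j)) m

def auxWU (x y : ℤ) : ℕ → ℤ × ℤ
  | 0 => (1, 0)
  | n+1 => ((auxWU x y n).1 * x - y^2 * (auxWU x y n).2,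
            (auxWU x y n).1 + x * (auxWU x y n).2)

lemma auxWU_pow (x y : ℤ) (n : ℕ) :
    (⟨x, y⟩ : GaussianInt)^n = ⟨(auxWU x y n).1, y * (auxWU x y n).2⟩ := by
  induction n with
  | zero => ext <;> simp [auxWU]
  | succ n ih =>
    rw [pow_succ, ih]
    ext <;> simp [auxWU, Zsqrtd.re_mul, Zsqrtd.im_mul] <;> ring

lemma auxWU_mod (x y : ℤ) (n : ℕ) : ∃ C D : ℤ,
    (auxWU x y n).1 - x^n = y^2 * C ∧ (auxWU x y n).2 * x - n * x^n = y^2 * D := by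
  induction n with
  | zero => exact ⟨0, 0, by simp [auxWU], by simp [auxWU]⟩
  | succ n ih =>
    obtain ⟨C, D, h1, h2⟩ := ih
    refine ⟨C * x - (auxWU x y n).2, C * x + x * D, ?_, ?_⟩
    · show (auxWU x y n).1 * x - y^2 * (auxWU x y n).2 - x^(n+1) = _
      linear_combination x * h1
    · show ((auxWU x y n).1 + x * (auxWU x y n).2) * x - ((n:ℕ)+1 : ℤ) * x^(n+1) = _
      push_cast
      linear_combination x * h1 + x * h2

def auxPh (x : ℤ) (n : ℕ) : ℤ × ℤ :=
  if n % 4 = 0 then (1, -(n:ℤ)*x)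
  else if n % 4 = 1 then ((n:ℤ)*x, 1)
  else if n % 4 = 2 then (-1, (n:ℤ)*x)
  else (-(n:ℤ)*x, -1)

lemma auxWU_one (x y : ℤ) (hy : y^2 = 1) (n : ℕ) : ∃ C D : ℤ,
    (auxWU x y n).1 - (auxPh x n).1 = x^2 * C ∧
    (auxWU x y n).2 - (auxPh x n).2 = x^2 * D := by
  induction n with
  | zero => exact ⟨0, 0, by simp [auxWU, auxPh], by simp [auxWU, auxPh]⟩
  | succ n ih =>
    obtain ⟨C, D, h1, h2⟩ := ih
    have hm : (n+1) % 4 = (n%4+1)%4 := by omega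
    simp only [auxWU]
    rcases (by omega : n%4 = 0 ∨ n%4 = 1 ∨ n%4 = 2 ∨ n%4 = 3) with h|h|h|h
    · have hm1 : (n+1)%4 = 1 := by omega
      simp only [auxPh, h, hm1, reduceIte] at h1 h2 ⊢
      norm_num at h1 h2
      refine ⟨x*C - D, C - n + x*D, ?_, ?_⟩ <;> push_cast
      · linear_combination x*h1 - h2 - (auxWU x y n).2*hy
      · linear_combination h1 + x*h2
    · have hm1 : (n+1)%4 = 2 := by omega
      simp only [auxPh, h, hm1, reduceIte] at h1 h2 ⊢
      norm_num at h1 h2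
      refine ⟨(n:ℤ) + x*C - D, C + x*D, ?_, ?_⟩ <;> push_cast
      · linear_combination x*h1 - h2 - (auxWU x y n).2*hy
      · linear_combination h1 + x*h2
    · have hm1 : (n+1)%4 = 3 := by omega
      simp only [auxPh, h, hm1, reduceIte] at h1 h2 ⊢
      norm_num at h1 h2
      refine ⟨x*C - D, C + n + x*D, ?_, ?_⟩ <;> push_cast
      · linear_combination x*h1 - h2 - (auxWU x y n).2*hy
      · linear_combination h1 + x*h2
    · have hm1 : (n+1)%4 = 0 := by omega
      simp only [auxPh, h, hm1, reduceIte] at h1 h2 ⊢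
      norm_num at h1 h2
      refine ⟨-(n:ℤ) + x*C - D, C + x*D, ?_, ?_⟩ <;> push_cast
      · linear_combination x*h1 - h2 - (auxWU x y n).2*hy
      · linear_combination h1 + x*h2

lemma aux_sq_one {r s : ℤ} (h : r*r + s*s = 1) :
    (r = 1 ∧ s = 0) ∨ (r = -1 ∧ s = 0) ∨ (r = 0 ∧ s = 1) ∨ (r = 0 ∧ s = -1) := by
  have h1 : -1 ≤ r ∧ r ≤ 1 := by constructor <;> nlinarith [mul_self_nonneg s]
  have h2 : -1 ≤ s ∧ s ≤ 1 := by constructor <;> nlinarith [mul_self_nonneg r]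
  obtain ⟨a,b⟩ := h1; obtain ⟨c,d⟩ := h2
  interval_cases r <;> interval_cases s <;> omega

/-- **The Diophantine equation `2^{k+1} k^k - (k+1)^{k+1} = w²` has no solutions
with `k ≥ 2`.** -/
theorem no_solutions_key_diophantine_eq (k : ℕ) (hk : 2 ≤ k) (w : ℤ) :
    (2 : ℤ) ^ (k + 1) * (k : ℤ) ^ k - ((k : ℤ) + 1) ^ (k + 1) ≠ w ^ 2 := by
  intro heq
  by_cases hke : k % 2 = 0
  · -- k even
    have h8 : (8:ℤ) ∣ 2^(k+1) := by
      calc (8:ℤ) = 2^3 := by norm_num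
      _ ∣ 2^(k+1) := pow_dvd_pow 2 (by omega)
    have hkz : ((k:ℤ)+1) % 2 = 1 := by omega
    have h1 : (8:ℤ) ∣ ((k:ℤ)+1)^(k+1) - ((k:ℤ)+1) := aux_odd_pow_mod8 hkz (by omega)
    have hw8 : (8:ℤ) ∣ w^2 + ((k:ℤ)+1) := by
      have hh : w^2 + ((k:ℤ)+1) = 2^(k+1) * (k:ℤ)^k - (((k:ℤ)+1)^(k+1) - ((k:ℤ)+1)) := by
        linear_combination -heq
      rw [hh]
      exact dvd_sub (h8.mul_right _) h1
    have hk8 : k % 8 = 6 := by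
      have hwsq : (8:ℤ) ∣ w^2 ∨ (8:ℤ) ∣ w^2 - 1 ∨ (8:ℤ) ∣ w^2 - 4 := by
        rcases Int.even_or_odd w with ⟨m, hm⟩ | ⟨m, hm⟩
        · rcases Int.even_or_odd m with ⟨r, hr⟩ | ⟨r, hr⟩
          · exact Or.inl ⟨2*r^2, by subst hm hr; ring⟩
          · refine Or.inr (Or.inr ⟨2*r^2+2*r, by subst hm hr; ring⟩)
        · exact Or.inr (Or.inl (aux_odd_sq_mod8 (by omega)))
      set s := w^2 with hs
      clear_value s
      rcases hwsq with h|h|h <;> omega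
    obtain ⟨u, hu⟩ : ∃ u, k = 2*u := ⟨k/2, by omega⟩
    have hu4 : u % 4 = 3 := by omega
    have hdvd : ((u:ℤ)) ∣ w^2 + 1 := by
      have h2 : (u:ℤ) ∣ (k:ℤ) := ⟨2, by push_cast [hu]; ring⟩
      have h3 : (u:ℤ) ∣ (k:ℤ)^k := dvd_pow h2 (by omega)
      have h4 : (u:ℤ) ∣ ((k:ℤ)+1)^(k+1) - 1 := by
        have h5 : (u:ℤ) ∣ ((k:ℤ)+1) - 1 := by simpa using h2
        have h6 := sub_dvd_pow_sub_pow ((k:ℤ)+1) 1 (k+1)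
        simpa using h5.trans h6
      have hh : w^2 + 1 = 2^(k+1) * (k:ℤ)^k - (((k:ℤ)+1)^(k+1) - 1) := by
        linear_combination -heq
      rw [hh]
      exact dvd_sub (h3.mul_left _) h4
    have hmod : w^2 % (u:ℤ) = (-1) % (u:ℤ) :=
      Int.modEq_iff_dvd.mpr
        (by rw [show (-1 : ℤ) - w^2 = -(w^2+1) by ring]; exact dvd_neg.mpr hdvd)
    have hJ : jacobiSym (w^2) u = jacobiSym (-1) u := jacobiSym.mod_left' hmod
    rw [show w^2 = w*w from sq w, jacobiSym.mul_left] at hJ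
    rw [jacobiSym.at_neg_one (Nat.odd_iff.mpr (by omega))] at hJ
    rw [ZMod.χ₄_nat_eq_if_mod_four] at hJ
    rw [if_neg (by omega), if_neg (by omega)] at hJ
    nlinarith [mul_self_nonneg (jacobiSym w u)]
  · -- k odd
    have hko : k % 2 = 1 := by omega
    obtain ⟨e, he⟩ : ∃ e, k+1 = 2*e := ⟨(k+1)/2, by omega⟩
    -- extraction helper, given the square decomposition
    by_cases hk4 : k % 4 = 3
    · -- k ≡ 3 mod 4
      obtain ⟨s, hs⟩ : ∃ s : ℕ, k + 1 = 4*s := ⟨(k+1)/4, by omega⟩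
      have hsc : ((k:ℤ)+1)^(k+1) = 2^(k+1) * (2^(k+1) * (s:ℤ)^(k+1)) := by
        have h1 : ((k:ℤ)+1) = 2*(2*(s:ℤ)) := by
          have h2 := congrArg (fun n : ℕ => (n:ℤ)) hs
          push_cast at h2
          linarith
        rw [h1, mul_pow, mul_pow]
      have hw2 : w^2 = 2^(k+1) * ((k:ℤ)^k - 2^(k+1)*(s:ℤ)^(k+1)) := by
        linear_combination -heq - hsc
      have hdvd : (2:ℤ)^e ∣ w := by
        refine (Int.pow_dvd_pow_iff (two_ne_zero)).mp ?_
        refine ⟨(k:ℤ)^k - 2^(k+1)*(s:ℤ)^(k+1), ?_⟩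
        rw [hw2, ← pow_mul]
        congr 2
        omega
      obtain ⟨w1, hw1⟩ := hdvd
      have hc1 : w1^2 = (k:ℤ)^k - 2^(k+1)*(s:ℤ)^(k+1) := by
        have h2k : (2:ℤ)^(k+1) ≠ 0 := by positivity
        refine mul_left_cancel₀ h2k ?_
        rw [← hw2, hw1, mul_pow, ← pow_mul]
        rw [show e*2 = k+1 by omega]
      have hw1odd : w1 % 2 = 1 := by
        rcases Int.even_or_odd w1 with ⟨m, hm⟩ | ⟨m, hm⟩
        · exfalso
          have hkk : Odd ((k:ℤ)^k) := Odd.pow (Int.odd_iff.mpr (by omega))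
          have h3 : (2:ℤ) ∣ 2^(k+1)*(s:ℤ)^(k+1) :=
            dvd_mul_of_dvd_left (dvd_pow_self 2 (by omega)) _
          have h4 : w1^2 = 2*(2*m^2) := by subst hm; ring
          rcases hkk with ⟨j, hj⟩
          rw [hj] at hc1
          obtain ⟨c, hcb⟩ := h3
          rw [hcb] at hc1
          omega
        · omega
      have h81 : (8:ℤ) ∣ w1^2 - 1 := aux_odd_sq_mod8 hw1odd
      have h8k : (8:ℤ) ∣ (k:ℤ)^k - (k:ℤ) := aux_odd_pow_mod8 (by omega) hko
      have h8s : (8:ℤ) ∣ 2^(k+1)*(s:ℤ)^(k+1) := by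
        refine dvd_mul_of_dvd_left ?_ _
        calc (8:ℤ) = 2^3 := by norm_num
        _ ∣ 2^(k+1) := pow_dvd_pow 2 (by omega)
      have hfin : (8:ℤ) ∣ (k:ℤ) - 1 := by
        set a := (k:ℤ)^k with ha
        set b := 2^(k+1)*(s:ℤ)^(k+1) with hb
        set s1 := w1^2 with hs1
        clear_value a b s1
        omega
      omega
    · -- k ≡ 1 mod 4
      have hk1 : k % 4 = 1 := by omega
      have hk5 : 5 ≤ k := by omega
      have heo : e % 2 = 1 := by omega
      have he3 : 3 ≤ e := by omega
      have h2e : ((k:ℤ)+1) = 2*(e:ℤ) := by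
        have h2 := congrArg (fun n : ℕ => (n:ℤ)) he
        push_cast at h2; linarith
      have hsc : ((k:ℤ)+1)^(k+1) = 2^(k+1) * ((e:ℤ)^e)^2 := by
        rw [h2e, mul_pow, ← pow_mul]
        rw [show e*2 = k+1 by omega]
      have hw2 : w^2 = 2^(k+1) * ((k:ℤ)^k - ((e:ℤ)^e)^2) := by
        linear_combination -heq - hsc
      have hpow2 : ((2:ℤ)^e)^2 = 2^(k+1) := by
        rw [← pow_mul]
        congr 1
        omega
      have hdvd : (2:ℤ)^e ∣ w := by
        refine (Int.pow_dvd_pow_iff (two_ne_zero)).mp ?_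
        exact ⟨(k:ℤ)^k - ((e:ℤ)^e)^2, by rw [hw2, hpow2]⟩
      obtain ⟨w1, hw1⟩ := hdvd
      set B : ℤ := (e:ℤ)^e with hBdef
      have key : w1^2 + B^2 = (k:ℤ)^k := by
        have h2k : (2:ℤ)^(k+1) ≠ 0 := by positivity
        have h3 : (2:ℤ)^(k+1) * w1^2 = 2^(k+1) * ((k:ℤ)^k - B^2) := by
          rw [← hw2, hw1, mul_pow, hpow2]
        have h4 := mul_left_cancel₀ h2k h3
        linarith
      have hB0 : 0 < B := by positivity
      have hkodd : Odd ((k:ℤ)^k) := Odd.pow (Int.odd_iff.mpr (by omega))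
      have hcop : IsCoprime w1 B := by
        rw [Int.isCoprime_iff_gcd_eq_one]
        by_contra hg
        obtain ⟨p, hp, hpd⟩ := Nat.exists_prime_and_dvd hg
        have hpz : Prime (p:ℤ) := Nat.prime_iff_prime_int.mp hp
        have hdw : (p:ℤ) ∣ w1 := (Int.natCast_dvd_natCast.mpr hpd).trans (Int.gcd_dvd_left w1 B)
        have hdB : (p:ℤ) ∣ B := (Int.natCast_dvd_natCast.mpr hpd).trans (Int.gcd_dvd_right w1 B)
        have hpe : (p:ℤ) ∣ (e:ℤ) := hpz.dvd_of_dvd_pow (hBdef ▸ hdB)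
        have hpk : (p:ℤ) ∣ (k:ℤ) := by
          have h5 : (p:ℤ) ∣ (k:ℤ)^k := by
            rw [← key]
            exact dvd_add (dvd_pow hdw two_ne_zero) (dvd_pow hdB two_ne_zero)
          exact hpz.dvd_of_dvd_pow h5
        have hpk1 : (p:ℤ) ∣ (k:ℤ)+1 := h2e ▸ hpe.mul_left 2
        have h1 : (p:ℤ) ∣ 1 := by
          have := dvd_sub hpk1 hpk
          simpa using this
        have h6 := Int.le_of_dvd one_pos h1
        have h7 := hp.two_le
        have : (2:ℤ) ≤ (p:ℤ) := by exact_mod_cast h7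
        linarith
      -- Gaussian integers
      set z : GaussianInt := ⟨w1, B⟩ with hz
      have hznorm : z * star z = ((k:GaussianInt))^k := by
        have hcast : ((k:GaussianInt))^k = ((k^k : ℕ) : GaussianInt) := by push_cast; ring
        rw [hcast, hz, Zsqrtd.star_mk]
        ext
        · simp only [Zsqrtd.re_mul, Zsqrtd.re_natCast]
          push_cast
          linear_combination key
        · simp only [Zsqrtd.im_mul, Zsqrtd.im_natCast]
          ring
      have hzcop : IsCoprime z (star z) := by
        obtain ⟨a, b, hab⟩ := hcop
        obtain ⟨j, hj⟩ := hkodd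
        have hok : IsCoprime (2:ℤ) ((k:ℤ)^k) := ⟨j+1, -1, by linarith⟩
        obtain ⟨c, dd, hcd⟩ := hok
        refine ⟨⟨c*a + dd*w1, -(c*b) - dd*B⟩, ⟨c*a, c*b⟩, ?_⟩
        rw [hz, Zsqrtd.star_mk]
        ext
        · simp only [Zsqrtd.re_add, Zsqrtd.re_mul, Zsqrtd.re_one]
          linear_combination 2*c*hab + hcd + dd*key
        · simp only [Zsqrtd.im_add, Zsqrtd.im_mul, Zsqrtd.im_one]
          ring
      obtain ⟨α0, hassoc⟩ := exists_associated_pow_of_mul_eq_pow' hzcop hznorm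
      obtain ⟨u, hu⟩ := hassoc
      have hexists : ∃ α : GaussianInt, α^k = z := by
        have h1n : ((u:GaussianInt)).norm.natAbs = 1 := Zsqrtd.norm_eq_one_iff.mpr u.isUnit
        set v := (u : GaussianInt) with hv
        have h3 := Zsqrtd.norm_def v
        have h4 : 0 ≤ v.norm := Zsqrtd.norm_nonneg (by norm_num) v
        have h2 : v.re*v.re + v.im*v.im = 1 := by
          have h5 : v.norm = 1 := by omega
          linear_combination -h3 + h5
        have h5 := aux_sq_one h2
        have hI4 : ((⟨0,1⟩ : GaussianInt))^4 = 1 := by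
          ext <;> simp [pow_succ, Zsqrtd.re_mul, Zsqrtd.im_mul]
        have hIk : ((⟨0,1⟩ : GaussianInt))^k = ⟨0,1⟩ := by
          obtain ⟨m, hm⟩ : ∃ m, k = 4*m+1 := ⟨k/4, by omega⟩
          rw [hm, pow_succ, pow_mul, hI4, one_pow, one_mul]
        have hvk : v^k = v := by
          rcases h5 with ⟨h6,h7⟩|⟨h6,h7⟩|⟨h6,h7⟩|⟨h6,h7⟩
          · have hveq : v = 1 := by ext <;> simp [h6, h7]
            rw [hveq, one_pow]
          · have hveq : v = -1 := by ext <;> simp [h6, h7]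
            rw [hveq, Odd.neg_one_pow (Nat.odd_iff.mpr hko)]
          · have hveq : v = ⟨0,1⟩ := by ext <;> simp [h6, h7]
            rw [hveq, hIk]
          · have hveq : v = -⟨0,1⟩ := by ext <;> simp [h6, h7]
            rw [hveq, Odd.neg_pow (Nat.odd_iff.mpr hko), hIk]
        exact ⟨α0 * v, by rw [mul_pow, hvk]; exact hu⟩
      obtain ⟨α, hα⟩ := hexists
      set x := α.re with hxd
      set y := α.im with hyd
      have hαxy : α = (⟨x, y⟩ : GaussianInt) := rfl
      have hnormz : z.norm = (k:ℤ)^k := by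
        rw [hz]
        rw [Zsqrtd.norm_def]
        linear_combination key
      have hnα : α.norm = (k:ℤ) := by
        have h1 : α.norm^k = (k:ℤ)^k := by
          have h2 := congrArg Zsqrtd.norm hα
          have h3 : Zsqrtd.norm (α^k) = (Zsqrtd.norm α)^k :=
            map_pow (Zsqrtd.normMonoidHom (d := -1)) α k
          rw [h3, hnormz] at h2
          exact h2
        have h3 : 0 ≤ α.norm := Zsqrtd.norm_nonneg (by norm_num) α
        have h5 : (α.norm.natAbs : ℤ) = α.norm := Int.natAbs_of_nonneg h3
        have h4 : α.norm.natAbs ^ k = k^k := by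
          have h6 : ((α.norm.natAbs ^ k : ℕ) : ℤ) = ((k^k : ℕ) : ℤ) := by
            push_cast [h5]
            exact h1
          exact_mod_cast h6
        have h7 := Nat.pow_left_injective (by omega : k ≠ 0) h4
        rw [← h5, h7]
      have hxyk : x^2 + y^2 = (k:ℤ) := by
        have h1 := Zsqrtd.norm_def α
        rw [hnα] at h1
        linear_combination -h1
      have hB : B = y * (auxWU x y k).2 := by
        have h1 := auxWU_pow x y k
        rw [← hαxy, hα, hz] at h1
        have h2 := congrArg Zsqrtd.im h1
        simpa using h2
      have hy0 : y ≠ 0 := by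
        intro h0
        rw [h0, zero_mul] at hB
        omega
      have hy1 : y = 1 ∨ y = -1 := by
        by_contra hcon
        have hna : y.natAbs ≠ 1 := by
          intro h1
          rcases Int.natAbs_eq_iff.mp h1 with h2 | h2 <;> simp [h2] at hcon ⊢ <;> tauto
        obtain ⟨p, hp, hpy⟩ := Nat.exists_prime_and_dvd hna
        have hpz : Prime (p:ℤ) := Nat.prime_iff_prime_int.mp hp
        have hpyz : (p:ℤ) ∣ y :=
          (Int.natCast_dvd_natCast.mpr hpy).trans (Int.natAbs_dvd.mpr dvd_rfl)
        have hpB : (p:ℤ) ∣ B := hB ▸ (hpyz.mul_right _)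
        have hpe : (p:ℤ) ∣ (e:ℤ) := hpz.dvd_of_dvd_pow (hBdef ▸ hpB)
        have hp2 : (2:ℤ) ≤ (p:ℤ) := by exact_mod_cast hp.two_le
        have hpk : ¬ (p:ℤ) ∣ (k:ℤ) := by
          intro h1
          have h3 : (p:ℤ) ∣ (k:ℤ)+1 := h2e ▸ hpe.mul_left 2
          have h2 : (p:ℤ) ∣ 1 := by simpa using dvd_sub h3 h1
          have h4 := Int.le_of_dvd one_pos h2
          linarith
        have hpx : ¬ (p:ℤ) ∣ x := by
          intro h1
          apply hpk
          rw [← hxyk]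
          exact dvd_add (dvd_pow h1 two_ne_zero) (dvd_pow hpyz two_ne_zero)
        have hpU : ¬ (p:ℤ) ∣ (auxWU x y k).2 := by
          intro h1
          obtain ⟨C, D, hc1, hc2⟩ := auxWU_mod x y k
          have h2 : (p:ℤ) ∣ (k:ℤ)*x^k := by
            have h3 : (p:ℤ) ∣ y^2*D := (dvd_pow hpyz two_ne_zero).mul_right D
            have h4 : (k:ℤ)*x^k = (auxWU x y k).2 * x - y^2*D := by linarith [hc2]
            rw [h4]
            exact dvd_sub (h1.mul_right x) h3
          rcases hpz.dvd_mul.mp h2 with h5 | h5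
          · exact hpk h5
          · exact hpx (hpz.dvd_of_dvd_pow h5)
        have hpeB : ((p:ℤ))^e ∣ B := by
          rw [hBdef]
          exact pow_dvd_pow_of_dvd hpe e
        have hpey : ((p:ℤ))^e ∣ y := by
          have hco : IsCoprime ((p:ℤ)^e) ((auxWU x y k).2) :=
            ((Prime.coprime_iff_not_dvd hpz).mpr hpU).pow_left
          exact hco.dvd_of_dvd_mul_right (hB ▸ hpeB)
        have hle : (p:ℤ)^e ≤ |y| := Int.le_of_dvd (abs_pos.mpr hy0) ((dvd_abs _ _).mpr hpey)
        have h2e' : (2:ℤ)^e ≤ (p:ℤ)^e := pow_le_pow_left₀ (by norm_num) hp2 e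
        have h9 : (2:ℤ)^e ≤ |y| := le_trans h2e' hle
        have hky : (2:ℤ)^(k+1) ≤ (k:ℤ) := by
          have h7 : (0:ℤ) ≤ 2^e := by positivity
          have h6 : ((2:ℤ)^e)^2 ≤ |y|^2 := pow_le_pow_left₀ h7 h9 2
          rw [hpow2, sq_abs] at h6
          linarith [sq_nonneg x, hxyk, h6]
        have hklt : (k:ℤ) < 2^(k+1) := by
          have h8 : k < 2^(k+1) :=
            lt_of_lt_of_le (Nat.lt_two_pow_self (n := k)) (Nat.pow_le_pow_right (by norm_num) (by omega))
          exact_mod_cast h8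
        linarith
      have hysq : y^2 = 1 := by rcases hy1 with h|h <;> rw [h] <;> norm_num
      have hx2 : x^2 = (k:ℤ) - 1 := by linarith [hxyk, hysq]
      obtain ⟨t, ht⟩ : ∃ t : ℤ, x = 2*t := by
        rcases Int.even_or_odd x with ⟨m, hm⟩ | ⟨m, hm⟩
        · exact ⟨m, by omega⟩
        · exfalso
          have h1 : x^2 = 4*(m^2)+4*m+1 := by rw [hm]; ring
          set q1 := x^2 with hq1
          set q2 := m^2 with hq2
          clear_value q1 q2
          omega
      have ht0 : t ≠ 0 := by
        intro h0
        rw [h0] at ht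
        rw [ht] at hx2
        norm_num at hx2
        omega
      have het : (e:ℤ) = 2*t^2 + 1 := by
        have h1 : x^2 = 4*t^2 := by rw [ht]; ring
        linarith [hx2, h2e]
      obtain ⟨C, D, hc1, hc2⟩ := auxWU_one x y hysq k
      have hU1 : (auxWU x y k).2 - 1 = x^2 * D := by
        have hph : (auxPh x k).2 = 1 := by simp [auxPh, hk1]
        rwa [hph] at hc2
      have hBy : x^2 ∣ B - y := by
        refine ⟨y*D, ?_⟩
        rw [hB]
        linear_combination y*hU1
      have hBe : x^2 ∣ B - (e:ℤ) := by
        obtain ⟨m, hm⟩ : ∃ m, e = 2*m+1 := ⟨e/2, by omega⟩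
        have hpe : (e:ℤ)^e = ((e:ℤ)^2)^m * (e:ℤ) := by
          rw [← pow_mul, ← pow_succ, hm]
        have h1 : B - (e:ℤ) = (e:ℤ)*(((e:ℤ)^2)^m - 1) := by
          rw [hBdef, hpe]
          ring
        have h2 : x^2 ∣ (e:ℤ)^2 - 1 := by
          refine ⟨t^2+1, ?_⟩
          rw [het, ht]
          ring
        have h3 : x^2 ∣ ((e:ℤ)^2)^m - 1 := by
          have h4 := sub_dvd_pow_sub_pow ((e:ℤ)^2) 1 m
          simpa using h2.trans (by simpa using h4)
        rw [h1]
        exact Dvd.dvd.mul_left h3 _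
      have hey : x^2 ∣ (e:ℤ) - y := by
        have hh := dvd_sub hBy hBe
        rw [show B - y - (B - (e:ℤ)) = (e:ℤ) - y from by ring] at hh
        exact hh
      rw [ht, het] at hey
      rcases hy1 with hyv|hyv
      · rw [hyv] at hey
        have h1 : (2*t)^2 ∣ 2*t^2 := by simpa using hey
        have h2 : (0:ℤ) < 2*t^2 := by positivity
        have h3 := Int.le_of_dvd h2 h1
        have h4 : (2*t)^2 = 4*t^2 := by ring
        have hT : (0:ℤ) < t^2 := by positivity
        linarith
      · rw [hyv] at hey
        have h1 : (2*t)^2 ∣ 2*t^2 + 2 := by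
          have hh : 2*t^2 + 1 - (-1) = 2*t^2 + 2 := by ring
          rwa [hh] at hey
        have h2 : (0:ℤ) < 2*t^2 + 2 := by positivity
        have h3 := Int.le_of_dvd h2 h1
        have h4 : (2*t)^2 = 4*t^2 := by ring
        have hT0 : (0:ℤ) < t^2 := by positivity
        have hT : (1:ℤ) ≤ t^2 := by simpa using Int.lt_iff_add_one_le.mp hT0
        have ht1 : t^2 = 1 := by linarith
        have hk5' : (k:ℤ) = 5 := by
          have hxx : x^2 = 4 := by rw [ht]; linear_combination 4*ht1
          linarith [hx2]
        have hke5 : k = 5 := by exact_mod_cast hk5'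
        have he5 : e = 3 := by omega
        have hw1v : w1^2 = 2396 := by
          have hBv : B = 27 := by rw [hBdef, he5]; norm_num
          rw [hBv, hke5] at key
          norm_num at key
          linarith
        set n := w1.natAbs with hn
        have h9 : (n:ℤ)^2 = 2396 := by
          rcases Int.natAbs_eq w1 with hh|hh <;>
            rw [hh] at hw1v <;> linear_combination hw1v
        have h10 : n^2 = 2396 := by exact_mod_cast h9
        rcases Nat.lt_or_ge n 49 with hlt|hge
        · have : n^2 ≤ 48^2 := Nat.pow_le_pow_left (by omega) 2
          omega
        · have : 49^2 ≤ n^2 := Nat.pow_le_pow_left hge 2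
          omega
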